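/- Fix k ≥ 1 and let C = (F, Init, P) be a deterministic transition system over input type I and state type S. If P'_k is 1-inductive in the witness system C'_k (i.e., for every initial state w of C'_k and every input i, P'_k i w holds; and for every witness state w and all inputs i0, i1, P'_k i0 w implies P'_k i1 (F'_k i0 w)), then P is k-inductive in C. -/

import Mathlib

/-- A (deterministic) trace: `s (n+1) = F (x n) (s n)` for all `n`. -/
def IsTrace {I S : Type*} (F : I → S → S) (x : ℕ → I) (s : ℕ → S) : Prop :=
  ∀ n, s (n + 1) = F (x n) (s n)

/-- The system `(F, Init, P)` is safe: every initialized trace satisfies the property. -/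
def Safe {I S : Type*} (F : I → S → S) (Init : Set S) (P : I → S → Prop) : Prop :=
  ∀ x s, IsTrace F x s → s 0 ∈ Init → ∀ n, P (x n) (s n)

/-- `P` is `k`-inductive in `(F, Init, P)`: BMC of depth `k-1` and consecution of depth `k`. -/
def KInductive {I S : Type*} (k : ℕ) (F : I → S → S) (Init : Set S) (P : I → S → Prop) :
    Prop :=
  (∀ x s, IsTrace F x s → s 0 ∈ Init → ∀ n < k, P (x n) (s n)) ∧
  (∀ x s, IsTrace F x s → (∀ n < k, P (x n) (s n)) → P (x k) (s k))

/-- The state type of the witness system: `k` copies of the latches,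
`k-1` copies of the inputs, and `k` initialization bits. -/
abbrev WState (k : ℕ) (I S : Type*) : Type _ :=
  (Fin k → S) × (Fin (k - 1) → I) × (Fin k → Bool)

/-- The transition function of the witness system. -/
def WTrans {I S : Type*} (k : ℕ) (F : I → S → S) (i : I) (w : WState k I S) :
    WState k I S :=
  ⟨fun j => if _h : (j : ℕ) = k - 1 then F i (w.1 j) else w.1 ⟨(j : ℕ) + 1, by omega⟩,
   fun j => if _h : (j : ℕ) = k - 2 then i else w.2.1 ⟨(j : ℕ) + 1, by omega⟩,
   fun j => if _h : (j : ℕ) = k - 1 then w.2.2 j else w.2.2 ⟨(j : ℕ) + 1, by omega⟩⟩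

/-- The initial states of the witness system. -/
def WInit (k : ℕ) (hk : 0 < k) (I : Type*) {S : Type*} (Init : Set S) :
    Set (WState k I S) :=
  {w | w.1 ⟨k - 1, by omega⟩ ∈ Init ∧ w.2.2 ⟨k - 1, by omega⟩ = true ∧
       ∀ j : Fin k, (j : ℕ) < k - 1 → w.2.2 j = false}

/-- The extended input sequence `X`: `X j = x j` for `j < k - 1` and `X (k-1) = i`. -/
def WX {I : Type*} (k : ℕ) (i : I) (x : Fin (k - 1) → I) (j : Fin k) : I :=
  if h : (j : ℕ) = k - 1 then i else x ⟨(j : ℕ), by omega⟩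

/-- The property of the witness system: the conjunction of `p0`–`p4`. -/
def WProp {I S : Type*} (k : ℕ) (hk : 0 < k) (F : I → S → S) (Init : Set S)
    (P : I → S → Prop) (i : I) (w : WState k I S) : Prop :=
  (∀ j : Fin k, ∀ hj : (j : ℕ) < k - 1,
      w.2.2 j = true → w.2.2 ⟨(j : ℕ) + 1, by omega⟩ = true) ∧
  (∀ j : Fin k, ∀ hj : (j : ℕ) < k - 1,
      w.2.2 j = true → w.1 ⟨(j : ℕ) + 1, by omega⟩ = F (WX k i w.2.1 j) (w.1 j)) ∧
  (∀ j : Fin k, w.2.2 j = true → P (WX k i w.2.1 j) (w.1 j)) ∧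
  (∀ j : Fin k, 1 ≤ (j : ℕ) →
      w.2.2 ⟨(j : ℕ) - 1, by omega⟩ = false → w.2.2 j = true → w.1 j ∈ Init) ∧
  (w.2.2 ⟨k - 1, by omega⟩ = true)

/-- If `P'_k` is `1`-inductive in the witness system `C'_k`, then `P` is
`k`-inductive in `C`. -/
theorem witness_oneInductive_kInductive (k : ℕ) (hk : 0 < k) {I S : Type*}
    (F : I → S → S) (Init : Set S) (P : I → S → Prop)
    (hbmc' : ∀ w ∈ WInit k hk I Init, ∀ i : I, WProp k hk F Init P i w)
    (hconsec' : ∀ (w : WState k I S) (i0 i1 : I),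
      WProp k hk F Init P i0 w → WProp k hk F Init P i1 (WTrans k F i0 w)) :
    KInductive k F Init P := by
  constructor
  · -- BMC: we in fact prove safety for all n
    intro x s htr h0 n _
    -- witness trace
    set w0 : WState k I S :=
      ⟨fun _ => s 0, fun j => x j, fun j => if (j : ℕ) = k - 1 then true else false⟩ with hw0
    let w : ℕ → WState k I S := fun n => Nat.rec w0 (fun m wm => WTrans k F (x m) wm) n
    have hwsucc : ∀ m, w (m + 1) = WTrans k F (x m) (w m) := fun m => rfl
    have hinit : w0 ∈ WInit k hk I Init := by
      refine ⟨h0, by simp [hw0], ?_⟩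
      intro j hj
      simp [hw0]
      omega
    have key : ∀ n, (w n).1 ⟨k - 1, by omega⟩ = s n ∧
        WProp k hk F Init P (x n) (w n) := by
      intro n
      induction n with
      | zero => exact ⟨rfl, hbmc' w0 hinit (x 0)⟩
      | succ m ih =>
        refine ⟨?_, ?_⟩
        · rw [hwsucc]
          show (WTrans k F (x m) (w m)).1 ⟨k - 1, by omega⟩ = s (m + 1)
          simp only [WTrans, dif_pos rfl]
          simp only [dite_true]
          rw [ih.1, htr m]
        · rw [hwsucc]
          exact hconsec' (w m) (x m) (x (m + 1)) ih.2
    obtain ⟨hl, hp⟩ := key n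
    have hb := hp.2.2.2.2
    have := hp.2.2.1 ⟨k - 1, by omega⟩ hb
    rw [hl] at this
    simpa [WX] using this
  · -- consecution
    intro x s htr hP
    set w : WState k I S := ⟨fun j => s j, fun j => x j, fun _ => true⟩ with hw
    have hwp : WProp k hk F Init P (x (k - 1)) w := by
      refine ⟨fun _ _ _ => rfl, ?_, ?_, fun j _ h _ => by simp at h, rfl⟩
      · intro j hj _
        show s ((j : ℕ) + 1) = F (WX k (x (k - 1)) w.2.1 j) (s j)
        rw [htr j]
        congr 1
        rw [WX, dif_neg (by omega : ¬ ((j : ℕ) = k - 1))]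
      · intro j _
        have hjk : (j : ℕ) < k := j.2
        have : WX k (x (k - 1)) w.2.1 j = x j := by
          by_cases h : (j : ℕ) = k - 1
          · simp [WX, h]
          · simp [WX, h, hw]
        rw [this]
        exact hP j hjk
    have hwp' := hconsec' w (x (k - 1)) (x k) hwp
    have hb : (WTrans k F (x (k - 1)) w).2.2 ⟨k - 1, by omega⟩ = true := by
      simp [WTrans, hw]
    have := hwp'.2.2.1 ⟨k - 1, by omega⟩ hb
    have hl : (WTrans k F (x (k - 1)) w).1 ⟨k - 1, by omega⟩ = s k := by
      show (if _h : (k - 1 : ℕ) = k - 1 then F (x (k - 1)) (w.1 ⟨k - 1, by omega⟩)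
        else w.1 ⟨k - 1 + 1, by omega⟩) = s k
      rw [dif_pos rfl]
      show F (x (k - 1)) (s (k - 1)) = s k
      rw [← htr (k - 1)]
      congr 1
      omega
    rw [hl] at this
    simpa [WX] using this
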